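/- Let γ : [0,1] → ℝ^d be a rectifiable curve and γ′ a curve obtained from γ by replacing a subcurve s of γ (with endpoints p₁ and p₂, where s is contained in the closed ball B(p₁, μ)) by the straight line segment from p₁ to p₂. Then the Fréchet distance between γ and γ′ is at most μ. -/
import Mathlib


open Set

/-- A reparametrization: an increasing continuous bijection of `[0,1]` onto itself. -/
def IsReparam (α : ℝ → ℝ) : Prop :=
  ContinuousOn α (Icc 0 1) ∧ StrictMonoOn α (Icc 0 1) ∧ BijOn α (Icc 0 1) (Icc 0 1)

/-- The Fréchet distance of two curves `γ₁ γ₂ : [0,1] → ℝ^d`. -/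
noncomputable def frechetDist {d : ℕ} (γ₁ γ₂ : ℝ → EuclideanSpace ℝ (Fin d)) : ℝ :=
  sInf {r : ℝ | ∃ α β, IsReparam α ∧ IsReparam β ∧
    ∀ t ∈ Icc (0:ℝ) 1, ‖γ₁ (α t) - γ₂ (β t)‖ ≤ r}

theorem isReparam_of {α : ℝ → ℝ} (hc : Continuous α) (hm : StrictMono α)
    (h0 : α 0 = 0) (h1 : α 1 = 1) : IsReparam α := by
  refine ⟨hc.continuousOn, hm.strictMonoOn _, ?_, hm.injective.injOn, ?_⟩
  · intro t ht
    exact ⟨h0 ▸ hm.monotone ht.1, h1 ▸ hm.monotone ht.2⟩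
  · intro y hy
    have h := intermediate_value_Icc (zero_le_one (α := ℝ)) hc.continuousOn
    rw [h0, h1] at h
    exact h hy

theorem pl_aux (a c c' b : ℝ) (hac : a < c) (hcc : c < c') (hcb : c' < b) :
    ∃ α : ℝ → ℝ, Continuous α ∧ StrictMono α ∧
      (∀ t, t ≤ a → α t = t) ∧ (∀ t, b ≤ t → α t = t) ∧
      (∀ t, a ≤ t → t ≤ c → α t ∈ Icc a c') ∧
      (∀ t, c ≤ t → t ≤ b → α t ∈ Icc c' b) := by
  have hca : (0:ℝ) < c - a := by linarith
  have hbc : (0:ℝ) < b - c := by linarith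
  set k1 := (c' - a) / (c - a) with hk1def
  set k2 := (b - c') / (b - c) with hk2def
  have hk1 : 1 < k1 := (one_lt_div hca).mpr (by linarith)
  have hk2 : 0 < k2 := div_pos (by linarith) hbc
  have hk2' : k2 < 1 := (div_lt_one hbc).mpr (by linarith)
  have e1 : (c - a) * k1 = c' - a := by
    rw [hk1def, mul_div_cancel₀ _ (ne_of_gt hca)]
  have e2 : (b - c) * k2 = b - c' := by
    rw [hk2def, mul_div_cancel₀ _ (ne_of_gt hbc)]
  have m1 : StrictMono (fun t : ℝ => a + (t - a) * k1) := by
    intro x y h; dsimp only; nlinarith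
  have m2 : StrictMono (fun t : ℝ => c' + (t - c) * k2) := by
    intro x y h; dsimp only; nlinarith
  have smax : ∀ f g : ℝ → ℝ, StrictMono f → StrictMono g →
      StrictMono (fun x => max (f x) (g x)) :=
    fun f g hf hg x y h => max_lt_max (hf h) (hg h)
  have smin : ∀ f g : ℝ → ℝ, StrictMono f → StrictMono g →
      StrictMono (fun x => min (f x) (g x)) :=
    fun f g hf hg x y h => min_lt_min (hf h) (hg h)
  refine ⟨fun t => min (max t (a + (t - a) * k1)) (max t (c' + (t - c) * k2)),
    ?_, ?_, ?_, ?_, ?_, ?_⟩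
  · exact (continuous_id.max (by continuity)).min (continuous_id.max (by continuity))
  · exact smin _ _ (smax _ _ strictMono_id m1) (smax _ _ strictMono_id m2)
  · -- t ≤ a
    intro t ht
    have l1 : a + (t - a) * k1 ≤ t := by nlinarith
    have l2 : t ≤ c' + (t - c) * k2 := by nlinarith
    simp only [max_eq_left l1, max_eq_right l2, min_eq_left l2]
  · -- b ≤ t
    intro t ht
    have l2 : c' + (t - c) * k2 ≤ t := by nlinarith
    have l1 : t ≤ a + (t - a) * k1 := by nlinarith
    simp only [max_eq_left l2, max_eq_right l1, min_eq_right l1]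
  · -- a ≤ t ≤ c
    intro t ht1 ht2
    have l1 : t ≤ a + (t - a) * k1 := by nlinarith
    have l12 : a + (t - a) * k1 ≤ c' + (t - c) * k2 := by nlinarith
    have l2 : t ≤ c' + (t - c) * k2 := le_trans l1 l12
    simp only [max_eq_right l1, max_eq_right l2, min_eq_left l12]
    constructor
    · nlinarith
    · nlinarith
  · -- c ≤ t ≤ b
    intro t ht1 ht2
    have l2 : t ≤ c' + (t - c) * k2 := by nlinarith
    have l12 : c' + (t - c) * k2 ≤ a + (t - a) * k1 := by nlinarith
    have l1 : t ≤ a + (t - a) * k1 := le_trans l2 l12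
    simp only [max_eq_right l1, max_eq_right l2, min_eq_right l12]
    constructor
    · nlinarith
    · nlinarith

/-- Replacing a subcurve `γ|[a,b]` of a rectifiable curve `γ` that is contained in the
closed ball `B(γ a, μ)` by the straight segment from `γ a` to `γ b` changes the curve by
Fréchet distance at most `μ`. -/
theorem stmt_13 {d : ℕ} (γ γ' : ℝ → EuclideanSpace ℝ (Fin d)) (μ a b : ℝ)
    (hμ : 0 ≤ μ) (hab : a ≤ b) (ha : a ∈ Icc (0:ℝ) 1) (hb : b ∈ Icc (0:ℝ) 1)
    (hγ : ContinuousOn γ (Icc 0 1))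
    (hrect : eVariationOn γ (Icc 0 1) ≠ ⊤)
    (hball : ∀ t ∈ Icc a b, γ t ∈ Metric.closedBall (γ a) μ)
    (hout : ∀ t ∈ Icc (0:ℝ) 1, t ∉ Ioo a b → γ' t = γ t)
    (hseg : ∀ t ∈ Icc a b, γ' t = γ a + ((t - a) / (b - a)) • (γ b - γ a)) :
    frechetDist γ γ' ≤ μ := by
  have hid : IsReparam (id : ℝ → ℝ) := isReparam_of continuous_id strictMono_id rfl rfl
  unfold frechetDist
  have hbdd : BddBelow {r : ℝ | ∃ α β, IsReparam α ∧ IsReparam β ∧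
      ∀ t ∈ Icc (0:ℝ) 1, ‖γ (α t) - γ' (β t)‖ ≤ r} := by
    refine ⟨0, ?_⟩
    rintro r ⟨α, β, -, -, h⟩
    exact le_trans (norm_nonneg _) (h 0 ⟨le_refl 0, zero_le_one⟩)
  rcases eq_or_lt_of_le hab with rfl | hab'
  · -- a = b : the curves coincide
    have hmem : (0:ℝ) ∈ {r : ℝ | ∃ α β, IsReparam α ∧ IsReparam β ∧
        ∀ t ∈ Icc (0:ℝ) 1, ‖γ (α t) - γ' (β t)‖ ≤ r} := by
      refine ⟨id, id, hid, hid, fun t ht => ?_⟩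
      simp only [id_eq]
      rw [hout t ht (by simp)]
      simp
    exact le_trans (csInf_le hbdd hmem) hμ
  · have hba : (0:ℝ) < b - a := by linarith
    apply le_of_forall_pos_le_add
    intro ε hε
    have hγb : ContinuousWithinAt γ (Icc 0 1) b := hγ b hb
    rw [Metric.continuousWithinAt_iff] at hγb
    obtain ⟨δ₀, hδ₀, hδ⟩ := hγb ε hε
    set ε' := min (ε * (b - a) / (μ + 1)) ((b - a) / 4) with hε'def
    set δ' := min (δ₀ / 2) ((b - a) / 4) with hδ'def
    have hε'pos : 0 < ε' := lt_min (div_pos (mul_pos hε hba) (by linarith)) (by linarith)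
    have hδ'pos : 0 < δ' := lt_min (by linarith) (by linarith)
    have hε'4 : ε' ≤ (b - a) / 4 := min_le_right _ _
    have hδ'4 : δ' ≤ (b - a) / 4 := min_le_right _ _
    have hδ'0 : δ' ≤ δ₀ / 2 := min_le_left _ _
    set c := a + ε' with hcdef
    set c' := b - δ' with hc'def
    have hac : a < c := by simp [hcdef]; linarith
    have hcc : c < c' := by rw [hcdef, hc'def]; linarith
    have hcb : c' < b := by rw [hc'def]; linarith
    obtain ⟨α, hαc, hαm, hα1, hα4, hα2, hα3⟩ := pl_aux a c c' b hac hcc hcb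
    have hrep : IsReparam α := isReparam_of hαc hαm (hα1 0 ha.1) (hα4 1 hb.2)
    have hvμ : ‖γ b - γ a‖ ≤ μ := by
      have h := hball b ⟨hab, le_refl b⟩
      rwa [Metric.mem_closedBall, dist_eq_norm] at h
    have hmem : μ + ε ∈ {r : ℝ | ∃ α β, IsReparam α ∧ IsReparam β ∧
        ∀ t ∈ Icc (0:ℝ) 1, ‖γ (α t) - γ' (β t)‖ ≤ r} := by
      refine ⟨α, id, hrep, hid, fun t ht => ?_⟩
      rw [id_eq]
      by_cases h1 : t ≤ a
      · rw [hα1 t h1, hout t ht (fun hio => absurd hio.1 (not_lt.mpr h1))]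
        simp
        linarith
      by_cases h4 : b ≤ t
      · rw [hα4 t h4, hout t ht (fun hio => absurd hio.2 (not_lt.mpr h4))]
        simp
        linarith
      push_neg at h1 h4
      have htab : t ∈ Icc a b := ⟨le_of_lt h1, le_of_lt h4⟩
      have hγ't := hseg t htab
      set lam := (t - a) / (b - a) with hlamdef
      have hlam0 : 0 ≤ lam := div_nonneg (by linarith) (le_of_lt hba)
      have hlam1 : lam ≤ 1 := (div_le_one hba).mpr (by linarith)
      rcases le_total t c with h2 | h3
      · -- near the start : α t ∈ [a, c'] ⊆ [a, b]
        have hrange := hα2 t (le_of_lt h1) h2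
        have hmemab : γ (α t) ∈ Metric.closedBall (γ a) μ :=
          hball (α t) ⟨hrange.1, le_trans hrange.2 (le_of_lt hcb)⟩
        have hγα : ‖γ (α t) - γ a‖ ≤ μ := by
          rwa [Metric.mem_closedBall, dist_eq_norm] at hmemab
        have hta : t - a ≤ ε * (b - a) / (μ + 1) := by
          have : t - a ≤ ε' := by rw [hcdef] at h2; linarith
          exact le_trans this (min_le_left _ _)
        have h7 : (t - a) * (μ + 1) ≤ ε * (b - a) :=
          (le_div_iff₀ (by linarith : (0:ℝ) < μ + 1)).mp hta
        have h5 : lam * ‖γ b - γ a‖ ≤ ε := by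
          have h6 : lam * ‖γ b - γ a‖ ≤ lam * μ := mul_le_mul_of_nonneg_left hvμ hlam0
          have h8 : lam * μ ≤ ε := by
            rw [hlamdef, div_mul_eq_mul_div, div_le_iff₀ hba]
            nlinarith
          linarith
        calc ‖γ (α t) - γ' t‖
            = ‖(γ (α t) - γ a) - lam • (γ b - γ a)‖ := by
              rw [hγ't, sub_add_eq_sub_sub]
          _ ≤ ‖γ (α t) - γ a‖ + ‖lam • (γ b - γ a)‖ := norm_sub_le _ _
          _ ≤ μ + ε := by
              rw [norm_smul, Real.norm_eq_abs, abs_of_nonneg hlam0]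
              linarith
      · -- near the end : α t ∈ [c', b], γ (α t) is close to γ b
        have hrange := hα3 t h3 (le_of_lt h4)
        have hα01 : α t ∈ Icc (0:ℝ) 1 := by
          constructor
          · have := hrange.1; rw [hc'def] at this; linarith [ha.1]
          · exact le_trans hrange.2 hb.2
        have hdistb : dist (α t) b < δ₀ := by
          rw [Real.dist_eq, abs_of_nonpos (by linarith [hrange.2])]
          have := hrange.1; rw [hc'def] at this; linarith
        have hγnear : dist (γ (α t)) (γ b) < ε := hδ hα01 hdistb
        have key : γ b - γ' t = (1 - lam) • (γ b - γ a) := by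
          rw [hγ't, sub_smul, one_smul]
          abel
        have hend : ‖γ b - γ' t‖ ≤ μ := by
          rw [key, norm_smul, Real.norm_eq_abs, abs_of_nonneg (by linarith)]
          nlinarith [norm_nonneg (γ b - γ a)]
        calc ‖γ (α t) - γ' t‖
            ≤ ‖γ (α t) - γ b‖ + ‖γ b - γ' t‖ := by
              have h := dist_triangle (γ (α t)) (γ b) (γ' t)
              simpa [dist_eq_norm] using h
          _ ≤ μ + ε := by
              rw [dist_eq_norm] at hγnear
              linarith
    exact csInf_le hbdd hmem
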